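/- The relation ≺ on sequences ℕ → Ordinal is irreflexive, transitive, and well-founded. -/
import Mathlib


/-- `b ≺ a` iff there are an index `i₀`, a finite set `F ⊆ ℕ` and an ordinal `β` with
`b i₀ ≤ β < a i₀`, `b i ≤ a i` for all `i`, and `b i ≤ β` for all `i ∉ F`. -/
def seqPrec (b a : ℕ → Ordinal) : Prop :=
  ∃ (i₀ : ℕ) (F : Finset ℕ) (β : Ordinal),
    b i₀ ≤ β ∧ β < a i₀ ∧ (∀ i, b i ≤ a i) ∧ ∀ i ∉ F, b i ≤ β

lemma seqPrec_irrefl' : ∀ a : ℕ → Ordinal, ¬ seqPrec a a := by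
  rintro a ⟨i₀, F, β, h1, h2, -, -⟩
  exact absurd (h1.trans_lt h2) (lt_irrefl _)

lemma seqPrec_trans' : ∀ a b c : ℕ → Ordinal, seqPrec c b → seqPrec b a → seqPrec c a := by
  rintro a b c ⟨j₀, G, γ, g1, g2, g3, g4⟩ ⟨i₀, F, β, h1, h2, h3, h4⟩
  exact ⟨i₀, F, β, (g3 i₀).trans h1, h2, fun i => (g3 i).trans (h3 i),
    fun i hi => (g3 i).trans (h4 i hi)⟩

universe u in
lemma seqPrec_wf : WellFounded (@seqPrec.{u}) := by
  haveI : IsIrrefl (ℕ → Ordinal.{u}) seqPrec := ⟨seqPrec_irrefl'⟩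
  haveI : IsTrans (ℕ → Ordinal.{u}) seqPrec := ⟨fun x y z h1 h2 => seqPrec_trans' z y x h1 h2⟩
  haveI : IsStrictOrder (ℕ → Ordinal.{u}) seqPrec := ⟨⟩
  rw [RelEmbedding.wellFounded_iff_isEmpty]
  constructor
  intro f
  set a : ℕ → ℕ → Ordinal := fun n => f n with ha
  have hdesc : ∀ n, seqPrec (a (n + 1)) (a n) := fun n => f.map_rel_iff.2 (Nat.lt_succ_self n)
  choose i F β h1 h2 h3 h4 using hdesc
  have hmono : ∀ j, Antitone fun n => a n j :=
    fun j => antitone_nat_of_succ_le fun k => h3 k j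
  obtain ⟨x, ⟨n₀, rfl⟩, hmin⟩ := Ordinal.lt_wf.has_min (Set.range β) ⟨β 0, 0, rfl⟩
  have hβmin : ∀ n, β n₀ ≤ β n := fun n => not_lt.1 (hmin (β n) ⟨n, rfl⟩)
  have hstab : ∀ j, ∃ N, ∀ m, N ≤ m → a m j = a N j := by
    intro j
    obtain ⟨x, ⟨N, rfl⟩, hm⟩ :=
      Ordinal.lt_wf.has_min (Set.range fun n => a n j) ⟨a 0 j, 0, rfl⟩
    exact ⟨N, fun m hm' => le_antisymm (hmono j hm') (not_lt.1 (hm _ ⟨m, rfl⟩))⟩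
  choose N hN using hstab
  set M := max (n₀ + 1) ((F n₀).sup N) with hM
  have hM1 : n₀ + 1 ≤ M := le_max_left _ _
  have hkey : β M < a M (i M) := h2 M
  by_cases hc : i M ∈ F n₀
  · have hNle : N (i M) ≤ M := le_trans (Finset.le_sup hc) (le_max_right _ _)
    have e1 : a (M + 1) (i M) = a M (i M) := by
      rw [hN (i M) (M + 1) (hNle.trans (Nat.le_succ M)), hN (i M) M hNle]
    exact absurd ((h1 M).trans_lt hkey) (by rw [e1]; exact lt_irrefl _)
  · have hle : a M (i M) ≤ β n₀ :=
      le_trans (hmono (i M) hM1) (h4 n₀ (i M) hc)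
    exact absurd (hkey.trans_le (hle.trans (hβmin M))) (lt_irrefl _)

/-- The relation `≺` on `ω`-indexed sequences of ordinals is irreflexive, transitive, and
well-founded. -/
theorem seqPrec_irrefl_trans_wellFounded :
    (∀ a : ℕ → Ordinal, ¬ seqPrec a a) ∧
      (∀ a b c : ℕ → Ordinal, seqPrec c b → seqPrec b a → seqPrec c a) ∧
      WellFounded seqPrec := by
  exact ⟨seqPrec_irrefl', seqPrec_trans', seqPrec_wf⟩
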